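/- There exists a universal constant C > 0 with the following property. Let θ : ℝ² → ℝ be bounded and Lipschitz continuous, let x ∈ ℝ², and let h ∈ ℝ² with h ≠ 0. Writing δ_hθ(z) = θ(z+h) − θ(z) and D[δ_hθ](x) = (1/(2π)) ∫_{ℝ²} (δ_hθ(x) − δ_hθ(x+y))² |y|^{−3} dy (a finite integral under these hypotheses), one has C · ‖θ‖_{L^∞(ℝ²)} · |h| · D[δ_hθ](x) ≥ |δ_hθ(x)|³. -/

import Mathlib

open Real MeasureTheory Metric

set_option maxHeartbeats 1000000

local notation "E2" => EuclideanSpace ℝ (Fin 2)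

private lemma vb (x : E2) {r : ℝ} (hr : 0 ≤ r) : (volume (ball x r)).toReal = π * r ^ 2 := by
  rw [EuclideanSpace.volume_ball]
  simp only [Fintype.card_fin, Nat.cast_ofNat, ← ENNReal.ofReal_pow hr, sq_sqrt pi_nonneg,
    ← ENNReal.ofReal_mul (by positivity : (0:ℝ) ≤ r^2)]
  rw [show ((2:ℝ)/2 + 1) = 2 by norm_num, Real.Gamma_two, ENNReal.toReal_ofReal (by positivity)]
  ring

private lemma vcb (x : E2) {r : ℝ} (hr : 0 ≤ r) : (volume (closedBall x r)).toReal = π * r ^ 2 := by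
  rw [EuclideanSpace.volume_closedBall]
  simp only [Fintype.card_fin, Nat.cast_ofNat, ← ENNReal.ofReal_pow hr, sq_sqrt pi_nonneg,
    ← ENNReal.ofReal_mul (by positivity : (0:ℝ) ≤ r^2)]
  rw [show ((2:ℝ)/2 + 1) = 2 by norm_num, Real.Gamma_two, ENNReal.toReal_ofReal (by positivity)]
  ring

lemma vbE (x : E2) {r : ℝ} (hr : 0 ≤ r) : volume (ball x r) = ENNReal.ofReal (π * r ^ 2) := by
  rw [EuclideanSpace.volume_ball]
  simp only [Fintype.card_fin, Nat.cast_ofNat, ← ENNReal.ofReal_pow hr, sq_sqrt pi_nonneg,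
    ← ENNReal.ofReal_mul (by positivity : (0:ℝ) ≤ r^2)]
  rw [show ((2:ℝ)/2 + 1) = 2 by norm_num, Real.Gamma_two]
  ring_nf

lemma inv_norm_integrable : IntegrableOn (fun y : E2 => ‖y‖⁻¹) (ball 0 1) := by
  constructor
  · exact (measurable_norm.inv).aestronglyMeasurable
  · rw [hasFiniteIntegral_iff_norm]
    set sh : ℕ → Set E2 := fun n => ball 0 ((1/2:ℝ)^n) \ ball 0 ((1/2:ℝ)^(n+1)) with hsh
    have hsub : ball (0:E2) 1 ⊆ {0} ∪ ⋃ n, sh n := by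
      intro y hy
      rcases eq_or_ne y 0 with rfl | hy0
      · exact Or.inl rfl
      right
      have hn : 0 < ‖y‖ := norm_pos_iff.2 hy0
      have h1 : ‖y‖ < 1 := by simpa using hy
      obtain ⟨m, hm⟩ := exists_pow_lt_of_lt_one hn (by norm_num : (1/2:ℝ) < 1)
      have hex : ∃ n, (1/2:ℝ)^(n+1) ≤ ‖y‖ := by
        rcases m with _ | k
        · simp only [pow_zero] at hm; linarith
        · exact ⟨k, hm.le⟩
      refine Set.mem_iUnion.2 ⟨Nat.find hex, ?_, ?_⟩
      · rcases Nat.eq_zero_or_pos (Nat.find hex) with h0 | hpos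
        · simp only [mem_ball, dist_zero_right, h0, pow_zero]; exact h1
        · have := Nat.find_min hex (Nat.sub_lt hpos one_pos)
          push_neg at this
          simp only [mem_ball, dist_zero_right]
          rwa [Nat.sub_add_cancel (m := 1) hpos] at this
      · simp only [mem_ball, dist_zero_right, not_lt]
        exact Nat.find_spec hex
    calc ∫⁻ y in ball (0:E2) 1, ENNReal.ofReal ‖(‖y‖⁻¹)‖
        ≤ ∫⁻ y in ({0} ∪ ⋃ n, sh n : Set E2), ENNReal.ofReal ‖(‖y‖⁻¹)‖ :=
          lintegral_mono_set hsub
      _ ≤ (∫⁻ y in ({0} : Set E2), ENNReal.ofReal ‖(‖y‖⁻¹)‖)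
          + ∫⁻ y in (⋃ n, sh n : Set E2), ENNReal.ofReal ‖(‖y‖⁻¹)‖ := lintegral_union_le _ _ _
      _ ≤ 0 + ∑' n, ∫⁻ y in sh n, ENNReal.ofReal ‖(‖y‖⁻¹)‖ := by
          gcongr
          · rw [setLIntegral_measure_zero _ _ (measure_singleton 0)]
          · exact lintegral_iUnion_le _ _
      _ ≤ 0 + ∑' n, ENNReal.ofReal (2*π) * ENNReal.ofReal ((1/2:ℝ)^n) := by
          gcongr with n
          have hb : ∀ y ∈ sh n, ENNReal.ofReal ‖(‖y‖⁻¹)‖ ≤ ENNReal.ofReal (2 * 2^n) := by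
            intro y hy
            apply ENNReal.ofReal_le_ofReal
            rw [Real.norm_eq_abs, abs_of_nonneg (by positivity)]
            have h1 : (1/2:ℝ)^(n+1) ≤ ‖y‖ := by
              have := hy.2; simp only [mem_ball, dist_zero_right, not_lt] at this; exact this
            calc ‖y‖⁻¹ ≤ ((1/2:ℝ)^(n+1))⁻¹ := by
                  apply inv_anti₀ (by positivity) h1
              _ = 2 * 2^n := by rw [← inv_pow]; norm_num [pow_succ]; ring
          calc ∫⁻ y in sh n, ENNReal.ofReal ‖(‖y‖⁻¹)‖
              ≤ ∫⁻ _ in sh n, ENNReal.ofReal (2 * 2^n) := by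
                apply setLIntegral_mono' (measurableSet_ball.diff measurableSet_ball) hb
            _ = ENNReal.ofReal (2 * 2^n) * volume (sh n) := by
                rw [setLIntegral_const]
            _ ≤ ENNReal.ofReal (2 * 2^n) * ENNReal.ofReal (π * ((1/2:ℝ)^n) ^ 2) := by
                gcongr
                calc volume (sh n) ≤ volume (ball (0:E2) ((1/2:ℝ)^n)) :=
                      measure_mono Set.diff_subset
                  _ = ENNReal.ofReal (π * ((1/2:ℝ)^n) ^ 2) := vbE _ (by positivity)
            _ = ENNReal.ofReal (2*π) * ENNReal.ofReal ((1/2:ℝ)^n) := by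
                rw [← ENNReal.ofReal_mul (by positivity), ← ENNReal.ofReal_mul (by positivity)]
                congr 1
                rw [show ((1/2:ℝ)^n)^2 = (1/2:ℝ)^n * (1/2:ℝ)^n by ring, show (2:ℝ)^n = ((1/2:ℝ)^n)⁻¹ by simp [← inv_pow]]
                field_simp
      _ < ⊤ := by
          rw [zero_add, ENNReal.tsum_mul_left]
          apply ENNReal.mul_lt_top ENNReal.ofReal_lt_top
          have : ∀ n:ℕ, ENNReal.ofReal ((1/2:ℝ)^n) = (ENNReal.ofReal (1/2))^n := fun n => by
            rw [ENNReal.ofReal_pow (by norm_num)]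
          rw [tsum_congr this, ENNReal.tsum_geometric]
          have h12 : (1:ENNReal) - ENNReal.ofReal (1/2) = ENNReal.ofReal (1/2) := by
            rw [← ENNReal.ofReal_one, ← ENNReal.ofReal_sub _ (by norm_num)]
            norm_num
          rw [h12]
          simp [ENNReal.inv_lt_top, ENNReal.ofReal_pos]

lemma F_integrable (θ : E2 → ℝ) (M : ℝ) (hM : ∀ z, |θ z| ≤ M) (K : NNReal)
    (hK : LipschitzWith K θ) (x h : E2) :
    Integrable (fun y : E2 =>
      ((θ (x + h) - θ x) - (θ (x + y + h) - θ (x + y))) ^ 2 / ‖y‖ ^ 3) := by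
  have hc : Continuous θ := hK.continuous
  set f : E2 → ℝ := fun y => (θ (x + h) - θ x) - (θ (x + y + h) - θ (x + y)) with hf
  have hfc : Continuous f := by fun_prop
  have hmeas : Measurable fun y : E2 => f y ^ 2 / ‖y‖ ^ 3 :=
    ((hfc.pow 2).measurable).div (measurable_norm.pow_const 3)
  have hM0 : 0 ≤ M := le_trans (abs_nonneg _) (hM 0)
  have hfK : ∀ y, |f y| ≤ 2 * K * ‖y‖ := by
    intro y
    have h1 : |θ (x + h) - θ (x + y + h)| ≤ K * ‖y‖ := by
      have := hK.dist_le_mul (x + h) (x + y + h)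
      rw [Real.dist_eq] at this
      refine this.trans (le_of_eq ?_)
      congr 1
      rw [dist_eq_norm, show x + h - (x + y + h) = -y by abel, norm_neg]
    have h2 : |θ x - θ (x + y)| ≤ K * ‖y‖ := by
      have := hK.dist_le_mul x (x + y)
      rw [Real.dist_eq] at this
      refine this.trans (le_of_eq ?_)
      congr 1
      rw [dist_eq_norm]
      simp
    calc |f y| = |(θ (x + h) - θ (x + y + h)) - (θ x - θ (x + y))| := by rw [hf]; ring_nf
      _ ≤ |θ (x + h) - θ (x + y + h)| + |θ x - θ (x + y)| := abs_sub _ _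
      _ ≤ K * ‖y‖ + K * ‖y‖ := add_le_add h1 h2
      _ = 2 * K * ‖y‖ := by ring
  have hfM : ∀ y, |f y| ≤ 4 * M := by
    intro y
    calc |f y| ≤ |θ (x+h) - θ x| + |θ (x+y+h) - θ (x+y)| := abs_sub _ _
      _ ≤ (|θ (x+h)| + |θ x|) + (|θ (x+y+h)| + |θ (x+y)|) :=
          add_le_add (abs_sub _ _) (abs_sub _ _)
      _ ≤ (M + M) + (M + M) := by gcongr <;> apply hM
      _ = 4 * M := by ring
  rw [← integrableOn_univ, ← Set.union_compl_self (ball (0:E2) 1)]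
  apply IntegrableOn.union
  · apply Integrable.mono' (inv_norm_integrable.const_mul ((2*K)^2))
    · exact hmeas.aestronglyMeasurable.restrict
    · refine ae_of_all _ fun y => ?_
      rw [Real.norm_eq_abs, abs_of_nonneg (div_nonneg (sq_nonneg _) (by positivity))]
      rcases eq_or_ne y 0 with rfl | hy0
      · simp [hf]
      · have hny : 0 < ‖y‖ := norm_pos_iff.2 hy0
        rw [div_le_iff₀ (by positivity)]
        calc f y ^ 2 ≤ (2*K*‖y‖)^2 := by
              rw [← sq_abs (f y)]
              exact pow_le_pow_left₀ (abs_nonneg _) (hfK y) 2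
          _ = (2*K)^2 * ‖y‖⁻¹ * ‖y‖^3 := by field_simp
  · apply Integrable.mono'
      (((integrable_one_add_norm (E := E2) (r := 3) (by
        rw [finrank_euclideanSpace_fin]; norm_num)).const_mul ((4*M)^2 * 8)).integrableOn)
    · exact hmeas.aestronglyMeasurable.restrict
    · rw [ae_restrict_iff' measurableSet_ball.compl]
      refine ae_of_all _ fun y hy => ?_
      have hy1 : 1 ≤ ‖y‖ := by
        simp only [Set.mem_compl_iff, mem_ball, dist_zero_right, not_lt] at hy
        exact hy
      have hny : (0:ℝ) < ‖y‖ := lt_of_lt_of_le one_pos hy1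
      rw [Real.norm_eq_abs, abs_of_nonneg (div_nonneg (sq_nonneg _) (by positivity))]
      have hr : (1 + ‖y‖ : ℝ) ^ (-(3:ℝ)) = ((1+‖y‖)^3)⁻¹ := by
        rw [Real.rpow_neg (by positivity), ← Real.rpow_natCast (1+‖y‖) 3]
        norm_num
      rw [hr, div_eq_mul_inv]
      have h8 : ((1+‖y‖)^3 : ℝ) ≤ 8 * ‖y‖^3 := by
        calc ((1+‖y‖)^3 : ℝ) ≤ (2*‖y‖)^3 := by
              apply pow_le_pow_left₀ (by positivity)
              linarith
          _ = 8 * ‖y‖^3 := by ring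
      calc f y ^2 * (‖y‖^3)⁻¹ ≤ (4*M)^2 * (‖y‖^3)⁻¹ := by
            apply mul_le_mul_of_nonneg_right _ (by positivity)
            rw [← sq_abs (f y)]
            exact pow_le_pow_left₀ (abs_nonneg _) (hfM y) 2
        _ ≤ (4*M)^2 * (8 * ((1+‖y‖)^3)⁻¹) := by
            apply mul_le_mul_of_nonneg_left _ (by positivity)
            calc (‖y‖^3)⁻¹ = 8 * (8*‖y‖^3)⁻¹ := by
                  field_simp
              _ ≤ 8 * ((1+‖y‖)^3)⁻¹ := by
                  exact mul_le_mul_of_nonneg_left (inv_anti₀ (by positivity) h8) (by norm_num)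
        _ = (4*M)^2 * 8 * ((1+‖y‖)^3)⁻¹ := by ring

-- volume of a closed annulus
lemma vol_ann {s t : ℝ} (h0 : 0 ≤ s) (hst : s ≤ t) :
    (volume (closedBall (0:E2) t \ ball 0 s)).toReal = π * t^2 - π * s^2 := by
  rw [measure_diff (ball_subset_closedBall.trans (closedBall_subset_closedBall hst))
      measurableSet_ball.nullMeasurableSet measure_ball_lt_top.ne,
    ENNReal.toReal_sub_of_le (measure_mono (ball_subset_closedBall.trans
      (closedBall_subset_closedBall hst))) measure_closedBall_lt_top.ne,
    vb _ h0, vcb _ (h0.trans hst)]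

lemma main_bound (θ : E2 → ℝ) (M : ℝ) (hM : ∀ z, |θ z| ≤ M) (K : NNReal)
    (hK : LipschitzWith K θ) (x h : E2) (hh : h ≠ 0) :
    |θ (x + h) - θ x| ^ 3 ≤ 1024 * M * ‖h‖ *
      ((1 / (2 * π)) * ∫ y : E2,
        ((θ (x + h) - θ x) - (θ (x + y + h) - θ (x + y))) ^ 2 / ‖y‖ ^ 3) := by
  have hc : Continuous θ := hK.continuous
  set δ : ℝ := θ (x + h) - θ x with hδ
  set f : E2 → ℝ := fun y => δ - (θ (x + y + h) - θ (x + y)) with hfdef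
  set I : ℝ := ∫ y : E2, f y ^ 2 / ‖y‖ ^ 3 with hI
  have hFint : Integrable (fun y : E2 => f y ^ 2 / ‖y‖ ^ 3) :=
    F_integrable θ M hM K hK x h
  have hInn : 0 ≤ I := integral_nonneg fun y => div_nonneg (sq_nonneg _) (by positivity)
  have hM0 : 0 ≤ M := le_trans (abs_nonneg _) (hM 0)
  set a : ℝ := |δ| with ha
  have ha2M : a ≤ 2 * M := by
    calc a ≤ |θ (x+h)| + |θ x| := abs_sub _ _
      _ ≤ M + M := add_le_add (hM _) (hM _)
      _ = 2 * M := by ring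
  rcases eq_or_lt_of_le (abs_nonneg δ) with h0 | hapos
  · have ha0 : a = 0 := by rw [ha, ← h0]
    rw [ha0, show (0:ℝ)^3 = 0 by norm_num]
    have h2π : (0:ℝ) < 2 * π := by positivity
    apply mul_nonneg (by positivity)
    apply mul_nonneg (le_of_lt (by positivity)) hInn
  have hapos : 0 < a := hapos
  have hMpos : 0 < M := by nlinarith
  have ht : 0 < ‖h‖ := norm_pos_iff.2 hh
  set t : ℝ := ‖h‖ with htdef
  set r : ℝ := 32 * M * t / a with hrdef
  have hr : 0 < r := by positivity
  have hhr : t ≤ r := by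
    rw [hrdef, le_div_iff₀ hapos]
    nlinarith
  -- the annulus
  set A : Set E2 := closedBall 0 (2*r) \ ball 0 r with hA
  have hAmeas : MeasurableSet A := measurableSet_closedBall.diff measurableSet_ball
  have hAcomp : IsCompact A :=
    (isCompact_closedBall _ _).inter_right isOpen_ball.isClosed_compl
  have hAfin : volume A < ⊤ := hAcomp.measure_lt_top
  have hAvol : (volume A).toReal = 3 * π * r^2 := by
    rw [hA, vol_ann hr.le (by linarith)]
    ring
  -- membership in A
  have hmemA : ∀ y, y ∈ A ↔ r ≤ ‖y‖ ∧ ‖y‖ ≤ 2*r := by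
    intro y
    simp [hA, Set.mem_diff, mem_closedBall, mem_ball, dist_zero_right, not_lt, and_comm]
  have hgcont : Continuous (fun y : E2 => θ (x + y + h) - θ (x + y)) := by fun_prop
  have hgintA : IntegrableOn (fun y : E2 => θ (x + y + h) - θ (x + y)) A :=
    hgcont.continuousOn.integrableOn_compact hAcomp
  have hfcont : Continuous f := by rw [hfdef]; fun_prop
  have hstep2 : (∫ y in A, (δ^2 - 2*δ*(θ (x + y + h) - θ (x + y)))) / (8*r^3) ≤ I := by
    have hint1 : IntegrableOn (fun y : E2 => δ^2 - 2*δ*(θ (x + y + h) - θ (x + y))) A :=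
      (integrableOn_const hAfin.ne).sub (hgintA.const_mul (2*δ))
    have hint2 : IntegrableOn (fun y : E2 => f y ^ 2) A :=
      (hfcont.pow 2).continuousOn.integrableOn_compact hAcomp
    have hint3 : IntegrableOn (fun y : E2 => f y ^ 2 / (8*r^3)) A := hint2.div_const _
    calc (∫ y in A, (δ^2 - 2*δ*(θ (x + y + h) - θ (x + y)))) / (8*r^3)
        ≤ (∫ y in A, f y ^ 2) / (8*r^3) := by
          apply div_le_div_of_nonneg_right _ (by positivity)
          apply setIntegral_mono_on hint1 hint2 hAmeas
          intro y _
          simp only [hfdef]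
          nlinarith [sq_nonneg (θ (x + y + h) - θ (x + y))]
      _ = ∫ y in A, f y ^ 2 / (8*r^3) := (integral_div _ _).symm
      _ ≤ ∫ y in A, f y ^ 2 / ‖y‖ ^ 3 := by
          apply setIntegral_mono_on hint3 hFint.integrableOn hAmeas
          intro y hy
          obtain ⟨hy1, hy2⟩ := (hmemA y).1 hy
          have hypos : (0:ℝ) < ‖y‖ := lt_of_lt_of_le hr hy1
          have hcube : ‖y‖ ^ 3 ≤ 8 * r ^ 3 := by
            calc ‖y‖ ^ 3 ≤ (2*r) ^ 3 := pow_le_pow_left₀ (norm_nonneg y) hy2 3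
              _ = 8 * r ^ 3 := by ring
          gcongr
      _ ≤ I := setIntegral_le_integral hFint
          (ae_of_all _ fun y => div_nonneg (sq_nonneg _) (by positivity))
  -- step 5: translation bound
  have hgbound : |∫ y in A, (θ (x + y + h) - θ (x + y))| ≤ 24 * π * M * r * t := by
    set ψ : E2 → ℝ := fun y => θ (x + y) with hψ
    have hψcont : Continuous ψ := by fun_prop
    set A' : Set E2 := (fun y => y - h) ⁻¹' A with hA'
    have hA'meas : MeasurableSet A' := hAmeas.preimage (measurable_id.sub_const h)
    have hnormub : ∀ y : E2, ‖y‖ ≤ ‖y - h‖ + t := by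
      intro y
      calc ‖y‖ = ‖(y - h) + h‖ := by rw [sub_add_cancel]
        _ ≤ ‖y - h‖ + t := norm_add_le _ _
    have hnormlb : ∀ y : E2, ‖y - h‖ - t ≤ ‖y‖ := by
      intro y
      have := norm_sub_le y h
      linarith [this]
    have hA'sub : A' ⊆ closedBall 0 (2*r + t) := by
      intro y hy
      have h2 : ‖y - h‖ ≤ 2*r := ((hmemA (y - h)).1 hy).2
      simp only [mem_closedBall, dist_zero_right]
      linarith [hnormub y]
    have hA'fin : volume A' < ⊤ :=
      lt_of_le_of_lt (measure_mono hA'sub) measure_closedBall_lt_top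
    have hψint : ∀ s : Set E2, volume s ≠ ⊤ → IntegrableOn ψ s := fun s hs =>
      Measure.integrableOn_of_bounded hs hψcont.aestronglyMeasurable
        (ae_of_all _ fun y => by rw [Real.norm_eq_abs]; exact hM _)
    -- translation identity
    have htrans : (∫ y in A, θ (x + y + h)) = ∫ y in A', ψ y := by
      have hpre : (fun y : E2 => y + h) ⁻¹' A' = A := by
        ext y
        simp [hA', add_sub_cancel_right]
      have heq := (measurePreserving_add_right (volume : Measure E2) h).setIntegral_preimage_emb
        (measurableEmbedding_addRight h) ψ A'
      rw [hpre] at heq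
      rw [← heq]
      apply setIntegral_congr_fun hAmeas
      intro y _
      rw [hψ]
      simp [add_assoc]
    have hint1 : IntegrableOn (fun y : E2 => θ (x + y + h)) A :=
      (hc.comp (by fun_prop)).continuousOn.integrableOn_compact hAcomp
    have hint2 : IntegrableOn ψ A := hψint A hAfin.ne
    have hsplitg : (∫ y in A, (θ (x + y + h) - θ (x + y)))
        = (∫ y in A' \ A, ψ y) - ∫ y in A \ A', ψ y := by
      rw [integral_sub hint1 hint2, htrans]
      have e1 : (∫ y in A' ∩ A, ψ y) + ∫ y in A' \ A, ψ y = ∫ y in A', ψ y :=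
        integral_inter_add_diff hAmeas (hψint A' hA'fin.ne)
      have e2 : (∫ y in A ∩ A', ψ y) + ∫ y in A \ A', ψ y = ∫ y in A, ψ y :=
        integral_inter_add_diff hA'meas hint2
      rw [Set.inter_comm A' A] at e1
      have : (∫ y in A, ψ y) = ∫ y in A, θ (x + y) := rfl
      rw [this] at e2 ⊢
      linarith
    -- measure bounds for the symmetric difference pieces
    set S : Set E2 := (closedBall 0 (r + t) \ ball 0 (r - t)) ∪
      (closedBall 0 (2*r + t) \ ball 0 (2*r - t)) with hS
    have hmemS : ∀ y : E2, (r - t ≤ ‖y‖ ∧ ‖y‖ ≤ r + t) ∨ (2*r - t ≤ ‖y‖ ∧ ‖y‖ ≤ 2*r + t) →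
        y ∈ S := by
      intro y hy
      rcases hy with ⟨h1, h2⟩ | ⟨h1, h2⟩
      · exact Or.inl ⟨by simpa [mem_closedBall, dist_zero_right] using h2,
          by simp only [mem_ball, dist_zero_right, not_lt]; linarith⟩
      · exact Or.inr ⟨by simpa [mem_closedBall, dist_zero_right] using h2,
          by simp only [mem_ball, dist_zero_right, not_lt]; linarith⟩
    have hsub1 : A' \ A ⊆ S := by
      rintro y ⟨hy1, hy2⟩
      obtain ⟨hb1, hb2⟩ := (hmemA (y - h)).1 hy1
      rw [hmemA] at hy2
      push_neg at hy2
      rcases lt_or_ge ‖y‖ r with hcase | hcase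
      · exact hmemS y (Or.inl ⟨by linarith [hnormlb y], by linarith⟩)
      · have := hy2 hcase
        exact hmemS y (Or.inr ⟨by linarith, by linarith [hnormub y]⟩)
    have hsub2 : A \ A' ⊆ S := by
      rintro y ⟨hy1, hy2⟩
      obtain ⟨hb1, hb2⟩ := (hmemA y).1 hy1
      have hy2' : ¬(r ≤ ‖y - h‖ ∧ ‖y - h‖ ≤ 2*r) := fun hcon => hy2 ((hmemA (y - h)).2 hcon)
      push_neg at hy2'
      rcases lt_or_ge ‖y - h‖ r with hcase | hcase
      · exact hmemS y (Or.inl ⟨by linarith, by linarith [hnormub y]⟩)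
      · have := hy2' hcase
        exact hmemS y (Or.inr ⟨by linarith [hnormlb y], by linarith⟩)
    have hf1 : volume (closedBall (0:E2) (r + t) \ ball 0 (r - t)) ≠ ⊤ :=
      (lt_of_le_of_lt (measure_mono Set.diff_subset) measure_closedBall_lt_top).ne
    have hf2 : volume (closedBall (0:E2) (2*r + t) \ ball 0 (2*r - t)) ≠ ⊤ :=
      (lt_of_le_of_lt (measure_mono Set.diff_subset) measure_closedBall_lt_top).ne
    have hSvol : (volume S).toReal ≤ 12 * π * r * t := by
      calc (volume S).toReal ≤ (volume (closedBall (0:E2) (r + t) \ ball 0 (r - t))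
            + volume (closedBall (0:E2) (2*r + t) \ ball 0 (2*r - t))).toReal := by
            apply ENNReal.toReal_mono (by rw [ENNReal.add_ne_top]; exact ⟨hf1, hf2⟩)
            exact measure_union_le _ _
        _ = (volume (closedBall (0:E2) (r + t) \ ball 0 (r - t))).toReal
            + (volume (closedBall (0:E2) (2*r + t) \ ball 0 (2*r - t))).toReal :=
            ENNReal.toReal_add hf1 hf2
        _ = (π * (r+t)^2 - π * (r-t)^2) + (π * (2*r+t)^2 - π * (2*r-t)^2) := by
            rw [vol_ann (by linarith) (by linarith), vol_ann (by linarith) (by linarith)]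
        _ = 12 * π * r * t := by ring
    have hSfin : volume S ≠ ⊤ :=
      (lt_of_le_of_lt (measure_union_le _ _)
        (ENNReal.add_lt_top.2 ⟨hf1.lt_top, hf2.lt_top⟩)).ne
    have hbd : ∀ s : Set E2, s ⊆ S → |∫ y in s, ψ y| ≤ M * (12 * π * r * t) := by
      intro s hsub
      have hsfin : volume s < ⊤ := lt_of_le_of_lt (measure_mono hsub) hSfin.lt_top
      calc |∫ y in s, ψ y| ≤ M * (volume s).toReal := by
            rw [← Real.norm_eq_abs]
            exact norm_setIntegral_le_of_norm_le_const (C := M) hsfin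
              (fun y _ => by rw [Real.norm_eq_abs]; exact hM _)
        _ ≤ M * (12 * π * r * t) := by
            apply mul_le_mul_of_nonneg_left _ hM0
            refine le_trans (ENNReal.toReal_mono hSfin (measure_mono hsub)) hSvol

    rw [hsplitg]
    calc |(∫ y in A' \ A, ψ y) - ∫ y in A \ A', ψ y|
        ≤ |∫ y in A' \ A, ψ y| + |∫ y in A \ A', ψ y| := abs_sub _ _
      _ ≤ M * (12 * π * r * t) + M * (12 * π * r * t) :=
          add_le_add (hbd _ hsub1) (hbd _ hsub2)
      _ = 24 * π * M * r * t := by ring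
  -- combine
  have hsplit : ∫ y in A, (δ^2 - 2*δ*(θ (x + y + h) - θ (x + y)))
      = δ^2 * (3*π*r^2) - 2*δ*∫ y in A, (θ (x + y + h) - θ (x + y)) := by
    rw [integral_sub (integrableOn_const hAfin.ne : IntegrableOn (fun _ : E2 => δ^2) A volume)
      (hgintA.const_mul (2*δ) : IntegrableOn (fun y : E2 => 2*δ*(θ (x + y + h) - θ (x + y))) A volume),
      setIntegral_const, integral_const_mul, smul_eq_mul, Measure.real, hAvol]
    ring
  have hIlow : (3*π*a^2*r^2 - 48*π*a*M*t*r) / (8*r^3) ≤ I := by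
    refine le_trans ?_ hstep2
    rw [hsplit]
    apply div_le_div_of_nonneg_right _ (by positivity)
    have h1 : δ^2 = a^2 := (sq_abs δ).symm
    have h2 : - (2*δ*∫ y in A, (θ (x + y + h) - θ (x + y))) ≥ -(2*a*(24*π*M*r*t)) := by
      have : 2*δ*∫ y in A, (θ (x + y + h) - θ (x + y)) ≤ 2*a*(24*π*M*r*t) := by
        calc 2*δ*∫ y in A, (θ (x + y + h) - θ (x + y))
            ≤ |2*δ*∫ y in A, (θ (x + y + h) - θ (x + y))| := le_abs_self _
          _ = 2*a*|∫ y in A, (θ (x + y + h) - θ (x + y))| := by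
              rw [abs_mul, abs_mul]; simp [ha]
          _ ≤ 2*a*(24*π*M*r*t) := by
              apply mul_le_mul_of_nonneg_left hgbound (by positivity)
      linarith
    calc 3*π*a^2*r^2 - 48*π*a*M*t*r
        = a^2*(3*π*r^2) - 2*a*(24*π*M*r*t) := by ring
      _ ≤ δ^2*(3*π*r^2) - 2*δ*∫ y in A, (θ (x + y + h) - θ (x + y)) := by
          rw [h1]; linarith [h2]
  -- final algebra
  have hXeq : (3*π*a^2*r^2 - 48*π*a*M*t*r) / (8*r^3) = (3*π/512) * a^3/(M*t) := by
    rw [hrdef]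
    field_simp
    ring
  rw [hXeq] at hIlow
  have h2π : (0:ℝ) < 2*π := by positivity
  rw [show (1024:ℝ) * M * t * ((1 / (2*π)) * I) = 1024 * (M*t*I) / (2*π) by ring,
    le_div_iff₀ h2π]
  have hI' : (3*π/512) * a^3 ≤ M*t*I := by
    rw [div_le_iff₀ (by positivity)] at hIlow
    nlinarith [hIlow]
  nlinarith [hI', pow_nonneg (abs_nonneg δ) 3, pi_pos]

/-- **nonlinear lower bound for the half-Laplacian in 2D.**
There is a universal constant `C > 0` such that for every bounded Lipschitz `θ : ℝ² → ℝ`,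
every `x` and every `h ≠ 0`, the dissipation integral
`D[δ_hθ](x) = (1/(2π)) ∫ (δ_hθ(x) − δ_hθ(x+y))² |y|^{−3} dy` is finite and
`C ‖θ‖_{L^∞} |h| D[δ_hθ](x) ≥ |δ_hθ(x)|³`. -/
theorem nonlinear_lower_bound_2d :
    ∃ C : ℝ, 0 < C ∧
      ∀ θ : EuclideanSpace ℝ (Fin 2) → ℝ,
      (∃ M : ℝ, ∀ z, |θ z| ≤ M) → (∃ K : NNReal, LipschitzWith K θ) →
      ∀ x h : EuclideanSpace ℝ (Fin 2), h ≠ 0 →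
        Integrable (fun y : EuclideanSpace ℝ (Fin 2) =>
          ((θ (x + h) - θ x) - (θ (x + y + h) - θ (x + y))) ^ 2 / ‖y‖ ^ 3) ∧
        C * (⨆ z, |θ z|) * ‖h‖ *
            ((1 / (2 * π)) * ∫ y : EuclideanSpace ℝ (Fin 2),
              ((θ (x + h) - θ x) - (θ (x + y + h) - θ (x + y))) ^ 2 / ‖y‖ ^ 3) ≥
          |θ (x + h) - θ x| ^ 3 := by
  refine ⟨1024, by norm_num, ?_⟩
  rintro θ ⟨M₀, hM₀⟩ ⟨K, hK⟩ x h hh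
  have hbdd : BddAbove (Set.range fun z => |θ z|) := ⟨M₀, by rintro _ ⟨z, rfl⟩; exact hM₀ z⟩
  have hMs : ∀ z, |θ z| ≤ ⨆ z, |θ z| := fun z => le_ciSup hbdd z
  exact ⟨F_integrable θ _ hMs K hK x h, main_bound θ _ hMs K hK x h hh⟩
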